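/- arXiv:1106.2013 — 2 statements merged into one kernel-verified Lean document; each statement's English description precedes it below -/
import Mathlib

section
/- Let J be a random variable uniformly distributed on a finite set 𝒥 of size J_n, and let Z be a random variable on a finite set C jointly distributed with J such that the total variation distance between the joint distribution p_{JZ} and the product p_J ⊗ p_Z is at most δ. Then for any family of mutually disjoint decoding sets {K_j ⊆ C : j ∈ 𝒥}, the average probability of correct decoding (1/J_n) ∑_j p_{JZ}({j} × K_j) is at most 1/J_n + δ. Equivalently, the average error probability is at least 1 - 1/J_n - δ. -/
/-- If the joint distribution of a uniformly distributed message `J` and the eavesdropper's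
output `Z` is `δ`-close in total variation to the product of its marginals, then for any
disjoint decoding sets the probability of correct decoding is at most `1/J_n + δ`;
equivalently the average error probability is at least `1 - 1/J_n - δ`. -/
theorem eavesdropper_decoding_error {J C : Type*} [Fintype J] [Nonempty J]
    [Fintype C] [DecidableEq C]
    (p : J → C → ℝ) (hp0 : ∀ j z, 0 ≤ p j z)
    (hunif : ∀ j, ∑ z, p j z = 1 / (Fintype.card J : ℝ))
    (δ : ℝ)
    (hTV : ∑ j, ∑ z, |p j z - (1 / (Fintype.card J : ℝ)) * (∑ i, p i z)| ≤ δ)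
    (K : J → Finset C) (hK : Pairwise fun i j => Disjoint (K i) (K j)) :
    (∑ j, ∑ z ∈ K j, p j z ≤ 1 / (Fintype.card J : ℝ) + δ) ∧
    (1 - 1 / (Fintype.card J : ℝ) - δ ≤ ∑ j, ∑ z ∈ (K j)ᶜ, p j z) := by
  set n : ℝ := (Fintype.card J : ℝ) with hn
  have hnpos : 0 < n := by
    simp [hn, Fintype.card_pos]
  set q : C → ℝ := fun z => ∑ i, p i z with hq
  have hq0 : ∀ z, 0 ≤ (1 / n) * q z := by
    intro z
    apply mul_nonneg
    · positivity
    · exact Finset.sum_nonneg fun i _ => hp0 i z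
  have hqsum : ∑ z, (1 / n) * q z = 1 / n := by
    rw [← Finset.mul_sum, Finset.sum_comm (γ := C)]
    simp only [hunif]
    rw [Finset.sum_const, nsmul_eq_mul, Finset.card_univ, ← hn]
    field_simp
  have hdisj : ∑ j, ∑ z ∈ K j, (1 / n) * q z ≤ 1 / n := by
    rw [← Finset.sum_biUnion (fun i _ j _ hij => hK hij)]
    calc ∑ z ∈ Finset.univ.biUnion K, (1 / n) * q z
        ≤ ∑ z, (1 / n) * q z :=
          Finset.sum_le_sum_of_subset_of_nonneg (Finset.subset_univ _)
            (fun z _ _ => hq0 z)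
      _ = 1 / n := hqsum
  have hTV' : ∑ j, ∑ z ∈ K j, |p j z - (1 / n) * q z| ≤ δ := by
    refine le_trans (Finset.sum_le_sum fun j _ => ?_) hTV
    exact Finset.sum_le_sum_of_subset_of_nonneg (Finset.subset_univ _)
      (fun z _ _ => abs_nonneg _)
  have hmain : ∑ j, ∑ z ∈ K j, p j z ≤ 1 / n + δ := by
    have h1 : ∑ j, ∑ z ∈ K j, p j z
        ≤ ∑ j, ∑ z ∈ K j, (1 / n) * q z + ∑ j, ∑ z ∈ K j, |p j z - (1 / n) * q z| := by
      rw [← Finset.sum_add_distrib]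
      refine Finset.sum_le_sum fun j _ => ?_
      rw [← Finset.sum_add_distrib]
      refine Finset.sum_le_sum fun z _ => ?_
      nlinarith [le_abs_self (p j z - (1 / n) * q z)]
    linarith
  refine ⟨hmain, ?_⟩
  have hsplit : ∀ j, ∑ z ∈ (K j)ᶜ, p j z = 1 / n - ∑ z ∈ K j, p j z := by
    intro j
    have := Finset.sum_add_sum_compl (K j) (p j)
    rw [hunif j] at this
    linarith
  have htot : ∑ j, ∑ z ∈ (K j)ᶜ, p j z = 1 - ∑ j, ∑ z ∈ K j, p j z := by
    simp only [hsplit]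
    rw [Finset.sum_sub_distrib, Finset.sum_const, nsmul_eq_mul, Finset.card_univ, ← hn]
    field_simp
  rw [htot]
  linarith
end

section
/- Let A, B, C be finite sets, W : A → P(B) a channel, D : B → P(C) a channel, and V = W ∘ D the degraded channel, i.e., V(z|x) = ∑_y W(y|x)·D(z|y). For an input distribution p on A, let (X,Y,Z) have joint distribution p(x)W(y|x)D(z|y). Then the conditional mutual information I(X;Y|Z) is a concave function of the input distribution p. -/
/-- Shannon entropy (natural log) of a function on a finite set. -/
noncomputable def ent {S : Type*} [Fintype S] (f : S → ℝ) : ℝ := ∑ s, Real.negMulLog (f s)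

/-- Conditional mutual information `I(X;Y|Z) = H(XZ) + H(YZ) - H(XYZ) - H(Z)` for the joint
distribution `p(x) W(y|x) D(z|y)` of the degraded wiretap channel. -/
noncomputable def cmi {A B C : Type*} [Fintype A] [Fintype B] [Fintype C]
    (p : A → ℝ) (W : A → B → ℝ) (D : B → C → ℝ) : ℝ :=
  ent (fun xz : A × C => ∑ y, p xz.1 * W xz.1 y * D y xz.2)
    + ent (fun yz : B × C => ∑ x, p x * W x yz.1 * D yz.1 yz.2)
    - ent (fun xyz : A × B × C => p xyz.1 * W xyz.1 xyz.2.1 * D xyz.2.1 xyz.2.2)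
    - ent (fun z : C => ∑ x, ∑ y, p x * W x y * D y z)

/-- Auxiliary function: `F a b = -a log a + a log b = a log (b/a)`. -/
noncomputable def Faux (a b : ℝ) : ℝ := Real.negMulLog a + a * Real.log b

lemma Faux_zero (b : ℝ) : Faux 0 b = 0 := by simp [Faux]

lemma Faux_eq {a b : ℝ} (ha : 0 < a) (hb : 0 < b) : Faux a b = a * Real.log (b / a) := by
  rw [Faux, Real.negMulLog, Real.log_div (ne_of_gt hb) (ne_of_gt ha)]
  ring

/-- Superadditivity of `Faux` (log-sum inequality). -/
lemma Faux_superadd {a1 b1 a2 b2 : ℝ} (h1 : 0 ≤ a1) (h1' : a1 ≤ b1)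
    (h2 : 0 ≤ a2) (h2' : a2 ≤ b2) :
    Faux a1 b1 + Faux a2 b2 ≤ Faux (a1 + a2) (b1 + b2) := by
  have hb1 : 0 ≤ b1 := h1.trans h1'
  have hb2 : 0 ≤ b2 := h2.trans h2'
  rcases eq_or_lt_of_le h1 with h1z | h1p
  · -- a1 = 0
    rw [← h1z, Faux_zero, zero_add, zero_add]
    rcases eq_or_lt_of_le hb2 with hb2z | hb2p
    · have ha2 : a2 = 0 := le_antisymm (hb2z ▸ h2') h2
      simp [ha2, Faux_zero]
    · rw [Faux, Faux]
      have : Real.log b2 ≤ Real.log (b1 + b2) :=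
        Real.log_le_log hb2p (by linarith)
      nlinarith [mul_le_mul_of_nonneg_left this h2]
  rcases eq_or_lt_of_le h2 with h2z | h2p
  · -- a2 = 0
    rw [← h2z, Faux_zero, add_zero, add_zero]
    rcases eq_or_lt_of_le hb1 with hb1z | hb1p
    · have ha1 : a1 = 0 := le_antisymm (hb1z ▸ h1') h1
      exact absurd ha1 (ne_of_gt h1p)
    · rw [Faux, Faux]
      have : Real.log b1 ≤ Real.log (b1 + b2) :=
        Real.log_le_log hb1p (by linarith)
      nlinarith [mul_le_mul_of_nonneg_left this h1]
  · -- both positive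
    have hb1p : 0 < b1 := lt_of_lt_of_le h1p h1'
    have hb2p : 0 < b2 := lt_of_lt_of_le h2p h2'
    have hs : 0 < a1 + a2 := by linarith
    have hbs : 0 < b1 + b2 := by linarith
    rw [Faux_eq h1p hb1p, Faux_eq h2p hb2p, Faux_eq hs hbs]
    have key := strictConcaveOn_log_Ioi.concaveOn.2
      (Set.mem_Ioi.mpr (div_pos hb1p h1p)) (Set.mem_Ioi.mpr (div_pos hb2p h2p))
      (le_of_lt (div_pos h1p hs)) (le_of_lt (div_pos h2p hs))
      (by field_simp)
    have hpt : (a1 / (a1 + a2)) • (b1 / a1) + (a2 / (a1 + a2)) • (b2 / a2)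
        = (b1 + b2) / (a1 + a2) := by
      simp only [smul_eq_mul]
      field_simp
    rw [hpt] at key
    simp only [smul_eq_mul] at key
    have := mul_le_mul_of_nonneg_left key (le_of_lt hs)
    calc a1 * Real.log (b1 / a1) + a2 * Real.log (b2 / a2)
        = (a1 + a2) * (a1 / (a1 + a2) * Real.log (b1 / a1)
            + a2 / (a1 + a2) * Real.log (b2 / a2)) := by field_simp
      _ ≤ (a1 + a2) * Real.log ((b1 + b2) / (a1 + a2)) := this

/-- Homogeneity of `Faux`. -/
lemma Faux_smul {t a b : ℝ} (ht : 0 ≤ t) (ha : 0 ≤ a) (hab : a ≤ b) :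
    Faux (t * a) (t * b) = t * Faux a b := by
  rcases eq_or_ne t 0 with htz | htz
  · simp [htz, Faux_zero]
  rcases eq_or_ne a 0 with haz | haz
  · simp [haz, Faux_zero]
  have hb : b ≠ 0 := by
    intro hbz
    exact haz (le_antisymm (hbz ▸ hab) ha)
  simp only [Faux, Real.negMulLog]
  rw [Real.log_mul htz hb, Real.log_mul htz haz]
  ring

/-- The linear coefficient `H(Z|X=x) - H(YZ|X=x)` (negated conditional entropy part). -/
noncomputable def caux {A B C : Type*} [Fintype B] [Fintype C]
    (W : A → B → ℝ) (D : B → C → ℝ) (x : A) : ℝ :=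
  (∑ z, Real.negMulLog (∑ y, W x y * D y z)) - ∑ y, ∑ z, Real.negMulLog (W x y * D y z)

/-- The concave part `H(Y|Z)` written as a sum of `Faux` terms. -/
noncomputable def Gaux {A B C : Type*} [Fintype A] [Fintype B] [Fintype C]
    (p : A → ℝ) (W : A → B → ℝ) (D : B → C → ℝ) : ℝ :=
  ∑ z, ∑ y, Faux (∑ x, p x * W x y * D y z) (∑ y', ∑ x, p x * W x y' * D y' z)

/-- Entropy of a product distribution `c * v` with `v` summing to one. -/
lemma ent_mul_aux {S : Type*} [Fintype S] (c : ℝ) (v : S → ℝ) (hv : ∑ s, v s = 1) :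
    ∑ s, Real.negMulLog (c * v s)
      = Real.negMulLog c + c * ∑ s, Real.negMulLog (v s) := by
  calc ∑ s, Real.negMulLog (c * v s)
      = ∑ s, (v s * Real.negMulLog c + c * Real.negMulLog (v s)) :=
        Finset.sum_congr rfl fun s _ => Real.negMulLog_mul c (v s)
    _ = (∑ s, v s) * Real.negMulLog c + c * ∑ s, Real.negMulLog (v s) := by
        rw [Finset.sum_add_distrib, ← Finset.sum_mul, ← Finset.mul_sum]
    _ = _ := by rw [hv, one_mul]

/-- Decomposition of `cmi` into a part linear in `p` and the concave part `H(Y|Z)`. -/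
lemma cmi_decomp {A B C : Type*} [Fintype A] [Fintype B] [Fintype C]
    (p : A → ℝ) (W : A → B → ℝ) (D : B → C → ℝ)
    (hW1 : ∀ a, ∑ b, W a b = 1) (hD1 : ∀ b, ∑ c, D b c = 1) :
    cmi p W D = (∑ x, p x * caux W D x) + Gaux p W D := by
  have hWD1 : ∀ x, ∑ z, ∑ y, W x y * D y z = 1 := by
    intro x
    rw [Finset.sum_comm]
    have : ∀ y ∈ Finset.univ, ∑ z, W x y * D y z = W x y := fun y _ => by
      rw [← Finset.mul_sum, hD1, mul_one]
    rw [Finset.sum_congr rfl this, hW1]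
  -- first piece: H(XZ)
  have e1 : ent (fun xz : A × C => ∑ y, p xz.1 * W xz.1 y * D y xz.2)
      = (∑ x, Real.negMulLog (p x))
        + ∑ x, p x * ∑ z, Real.negMulLog (∑ y, W x y * D y z) := by
    rw [ent, Fintype.sum_prod_type]
    have step : ∀ x ∈ Finset.univ, ∑ z, Real.negMulLog (∑ y, p x * W x y * D y z)
        = Real.negMulLog (p x) + p x * ∑ z, Real.negMulLog (∑ y, W x y * D y z) := by
      intro x _
      have h0 : ∀ z ∈ Finset.univ, Real.negMulLog (∑ y, p x * W x y * D y z)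
          = Real.negMulLog (p x * ∑ y, W x y * D y z) := fun z _ => by
        rw [show (∑ y, p x * W x y * D y z) = p x * ∑ y, W x y * D y z by
          simp [Finset.mul_sum, mul_assoc]]
      rw [Finset.sum_congr rfl h0, ent_mul_aux (p x) _ (hWD1 x)]
    rw [Finset.sum_congr rfl step, Finset.sum_add_distrib]
  -- third piece: H(XYZ)
  have e3 : ent (fun xyz : A × B × C => p xyz.1 * W xyz.1 xyz.2.1 * D xyz.2.1 xyz.2.2)
      = (∑ x, Real.negMulLog (p x))
        + ∑ x, p x * ∑ y, ∑ z, Real.negMulLog (W x y * D y z) := by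
    rw [ent, Fintype.sum_prod_type]
    have step : ∀ x ∈ Finset.univ,
        ∑ yz : B × C, Real.negMulLog (p x * W x yz.1 * D yz.1 yz.2)
        = Real.negMulLog (p x) + p x * ∑ y, ∑ z, Real.negMulLog (W x y * D y z) := by
      intro x _
      have hg1 : ∑ yz : B × C, W x yz.1 * D yz.1 yz.2 = 1 := by
        rw [Fintype.sum_prod_type, Finset.sum_comm]
        exact hWD1 x
      have h0 : ∀ yz ∈ (Finset.univ : Finset (B × C)),
          Real.negMulLog (p x * W x yz.1 * D yz.1 yz.2)
          = Real.negMulLog (p x * (W x yz.1 * D yz.1 yz.2)) := fun yz _ => by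
        rw [mul_assoc]
      rw [Finset.sum_congr rfl h0, ent_mul_aux (p x) _ hg1, Fintype.sum_prod_type]
    rw [Finset.sum_congr rfl step, Finset.sum_add_distrib]
  -- second and fourth pieces: H(YZ) - H(Z) = Gaux
  have e24 : ent (fun yz : B × C => ∑ x, p x * W x yz.1 * D yz.1 yz.2)
      - ent (fun z : C => ∑ x, ∑ y, p x * W x y * D y z) = Gaux p W D := by
    rw [ent, ent, Fintype.sum_prod_type, Finset.sum_comm, Gaux]
    rw [← Finset.sum_sub_distrib]
    refine Finset.sum_congr rfl fun z _ => ?_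
    have hrz : (∑ x, ∑ y, p x * W x y * D y z) = ∑ y', ∑ x, p x * W x y' * D y' z :=
      Finset.sum_comm
    rw [hrz]
    simp only [Faux]
    rw [Finset.sum_add_distrib, ← Finset.sum_mul]
    have : (∑ y, ∑ x, p x * W x y * D y z) * Real.log (∑ y', ∑ x, p x * W x y' * D y' z)
        = - Real.negMulLog (∑ y', ∑ x, p x * W x y' * D y' z) := by
      rw [Real.negMulLog]
      ring
    rw [this]
    ring
  rw [cmi, e1, e3, ← e24]
  simp only [caux]
  have : ∑ x, p x * ((∑ z, Real.negMulLog (∑ y, W x y * D y z))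
      - ∑ y, ∑ z, Real.negMulLog (W x y * D y z))
      = (∑ x, p x * ∑ z, Real.negMulLog (∑ y, W x y * D y z))
        - ∑ x, p x * ∑ y, ∑ z, Real.negMulLog (W x y * D y z) := by
    rw [← Finset.sum_sub_distrib]
    exact Finset.sum_congr rfl fun x _ => by ring
  rw [this]
  ring

/-- For a degraded channel, `I(X;Y|Z)` is concave in the input distribution. -/
theorem cmi_concave_in_input {A B C : Type*} [Fintype A] [Fintype B] [Fintype C]
    (W : A → B → ℝ) (hW0 : ∀ a b, 0 ≤ W a b) (hW1 : ∀ a, ∑ b, W a b = 1)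
    (D : B → C → ℝ) (hD0 : ∀ b c, 0 ≤ D b c) (hD1 : ∀ b, ∑ c, D b c = 1)
    (p q : A → ℝ) (hp0 : ∀ a, 0 ≤ p a) (hp1 : ∑ a, p a = 1)
    (hq0 : ∀ a, 0 ≤ q a) (hq1 : ∑ a, q a = 1)
    (t : ℝ) (ht : t ∈ Set.Icc (0:ℝ) 1) :
    t * cmi p W D + (1 - t) * cmi q W D ≤
      cmi (fun a => t * p a + (1 - t) * q a) W D := by
  obtain ⟨ht0, ht1⟩ := ht
  have ht1' : 0 ≤ 1 - t := by linarith
  rw [cmi_decomp p W D hW1 hD1, cmi_decomp q W D hW1 hD1,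
      cmi_decomp (fun a => t * p a + (1 - t) * q a) W D hW1 hD1]
  have hlin : ∑ x, (t * p x + (1 - t) * q x) * caux W D x
      = t * ∑ x, p x * caux W D x + (1 - t) * ∑ x, q x * caux W D x := by
    rw [Finset.mul_sum, Finset.mul_sum, ← Finset.sum_add_distrib]
    exact Finset.sum_congr rfl fun x _ => by ring
  have hconc : t * Gaux p W D + (1 - t) * Gaux q W D
      ≤ Gaux (fun a => t * p a + (1 - t) * q a) W D := by
    unfold Gaux
    rw [Finset.mul_sum, Finset.mul_sum, ← Finset.sum_add_distrib]
    refine Finset.sum_le_sum fun z _ => ?_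
    rw [Finset.mul_sum, Finset.mul_sum, ← Finset.sum_add_distrib]
    refine Finset.sum_le_sum fun y _ => ?_
    have hr0 : ∀ (r : A → ℝ), (∀ a, 0 ≤ r a) → ∀ y' : B,
        0 ≤ ∑ x, r x * W x y' * D y' z := fun r hr y' =>
      Finset.sum_nonneg fun x _ =>
        mul_nonneg (mul_nonneg (hr x) (hW0 x y')) (hD0 y' z)
    have hrle : ∀ (r : A → ℝ), (∀ a, 0 ≤ r a) →
        (∑ x, r x * W x y * D y z) ≤ ∑ y', ∑ x, r x * W x y' * D y' z := fun r hr =>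
      Finset.single_le_sum (fun y' _ => hr0 r hr y') (Finset.mem_univ y)
    have hmix : (∑ x, (t * p x + (1 - t) * q x) * W x y * D y z)
        = t * (∑ x, p x * W x y * D y z) + (1 - t) * (∑ x, q x * W x y * D y z) := by
      rw [Finset.mul_sum, Finset.mul_sum, ← Finset.sum_add_distrib]
      exact Finset.sum_congr rfl fun x _ => by ring
    have hmixZ : (∑ y', ∑ x, (t * p x + (1 - t) * q x) * W x y' * D y' z)
        = t * (∑ y', ∑ x, p x * W x y' * D y' z)
          + (1 - t) * (∑ y', ∑ x, q x * W x y' * D y' z) := by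
      rw [Finset.mul_sum, Finset.mul_sum, ← Finset.sum_add_distrib]
      refine Finset.sum_congr rfl fun y' _ => ?_
      rw [Finset.mul_sum, Finset.mul_sum, ← Finset.sum_add_distrib]
      exact Finset.sum_congr rfl fun x _ => by ring
    rw [hmix, hmixZ,
        ← Faux_smul ht0 (hr0 p hp0 y) (hrle p hp0),
        ← Faux_smul ht1' (hr0 q hq0 y) (hrle q hq0)]
    exact Faux_superadd (mul_nonneg ht0 (hr0 p hp0 y))
      (mul_le_mul_of_nonneg_left (hrle p hp0) ht0)
      (mul_nonneg ht1' (hr0 q hq0 y))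
      (mul_le_mul_of_nonneg_left (hrle q hq0) ht1')
  refine le_trans (le_of_eq (by ring)) (add_le_add (le_of_eq hlin.symm) hconc)
end
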